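/- The sequence ω is a probability distribution on ℕ: ω is summable and Σ_{j=0}^∞ ω(j) = 1. -/

import Mathlib

open Filter

/-- `ω` is a probability distribution on `ℕ`. -/
theorem omega_probability_distribution
    (lam lam_e : ℝ) (hlam0 : 0 < lam) (hlam1 : lam < 1)
    (hle0 : 0 < lam_e) (hle1 : lam_e < 1)
    (tbar : ℕ)
    (φ : ℕ → ℝ)
    (hφ0 : φ 0 = lam * lam_e / (lam * (tbar : ℝ) + 1))
    (hφ1 : ∀ j, j < tbar → φ (j + 1) = (1 - lam) * (1 - lam_e) * φ j)
    (hφ2 : ∀ j, tbar ≤ j → φ (j + 1) =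
      (1 - lam) * (1 - lam_e) * φ j + lam * (1 - lam_e) * φ (j - tbar))
    (ω : ℕ → ℝ)
    (hω0 : ω 0 = lam_e / (lam * (tbar : ℝ) + 1))
    (hω1 : ∀ j, 1 ≤ j → j ≤ tbar →
      ω j = (1 - lam) * (1 - lam_e) * ω (j - 1) + φ 0)
    (hω2 : ∀ j, tbar + 1 ≤ j →
      ω j = (1 - lam) * (1 - lam_e) * ω (j - 1) + φ 0
        - lam_e * ∑ l ∈ Finset.range (j - tbar), φ l) :
    Summable ω ∧ ∑' j : ℕ, ω j = 1 := by
  have hd : (0:ℝ) < lam * (tbar:ℝ) + 1 := by positivity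
  set a : ℝ := (1 - lam) * (1 - lam_e) with ha_def
  set b : ℝ := lam * (1 - lam_e) with hb_def
  have ha0 : 0 ≤ a := by rw [ha_def]; nlinarith
  have hb0 : 0 ≤ b := by rw [hb_def]; nlinarith
  have ha1 : a < 1 := by rw [ha_def]; nlinarith
  have hab : a + b = 1 - lam_e := by rw [ha_def, hb_def]; ring
  -- the geometric decay rate ρ
  set ρ : ℝ := (1 - lam_e) ^ ((↑(tbar + 1) : ℝ))⁻¹ with hρ_def
  have h1e : (0:ℝ) < 1 - lam_e := by linarith
  have hρ0 : 0 < ρ := Real.rpow_pos_of_pos h1e _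
  have hρ1 : ρ < 1 := Real.rpow_lt_one h1e.le (by linarith) (by positivity)
  have hρpow : ρ ^ (tbar + 1) = 1 - lam_e :=
    Real.rpow_inv_natCast_pow h1e.le (Nat.succ_ne_zero tbar)
  have haρ : a ≤ ρ := by
    have h1 : ρ ^ (tbar + 1) ≤ ρ := pow_le_of_le_one hρ0.le hρ1.le (Nat.succ_ne_zero tbar)
    have h2 : a ≤ 1 - lam_e := by linarith
    linarith [hρpow ▸ h1]
  have hρt : ρ ^ tbar ≤ 1 := pow_le_one₀ hρ0.le hρ1.le
  have hφ0nn : 0 ≤ φ 0 := by rw [hφ0]; positivity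
  -- nonnegativity and geometric bound for φ
  have hφb : ∀ j, 0 ≤ φ j ∧ φ j ≤ φ 0 * ρ ^ j := by
    intro j
    induction j using Nat.strong_induction_on with
    | _ j ih =>
      cases j with
      | zero => exact ⟨hφ0nn, by simp⟩
      | succ k =>
        rcases lt_or_ge k tbar with hk | hk
        · rw [hφ1 k hk]
          obtain ⟨h0, h1⟩ := ih k (Nat.lt_succ_self k)
          refine ⟨mul_nonneg ha0 h0, ?_⟩
          calc a * φ k ≤ ρ * (φ 0 * ρ ^ k) := mul_le_mul haρ h1 h0 hρ0.le
            _ = φ 0 * ρ ^ (k + 1) := by ring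
        · rw [hφ2 k hk]
          obtain ⟨h0, h1⟩ := ih k (Nat.lt_succ_self k)
          obtain ⟨h0', h1'⟩ := ih (k - tbar) (by omega)
          refine ⟨add_nonneg (mul_nonneg ha0 h0) (mul_nonneg hb0 h0'), ?_⟩
          have ek : ρ ^ (k - tbar) * ρ ^ tbar = ρ ^ k := by
            rw [← pow_add]; congr 1; omega
          have e1 : ρ ^ (k - tbar) * ρ ^ (tbar + 1) = ρ ^ (k + 1) := by
            rw [← pow_add]; congr 1; omega
          have key : a * ρ ^ k + b * ρ ^ (k - tbar) ≤ ρ ^ (k + 1) := by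
            have h2 : a * ρ ^ tbar + b ≤ a + b := by nlinarith
            calc a * ρ ^ k + b * ρ ^ (k - tbar)
                = ρ ^ (k - tbar) * (a * ρ ^ tbar + b) := by rw [← ek]; ring
              _ ≤ ρ ^ (k - tbar) * (a + b) := by
                  exact mul_le_mul_of_nonneg_left h2 (by positivity)
              _ = ρ ^ (k - tbar) * ρ ^ (tbar + 1) := by rw [hab, ← hρpow]
              _ = ρ ^ (k + 1) := e1
          calc a * φ k + b * φ (k - tbar)
              ≤ a * (φ 0 * ρ ^ k) + b * (φ 0 * ρ ^ (k - tbar)) := by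
                exact add_le_add (mul_le_mul_of_nonneg_left h1 ha0)
                  (mul_le_mul_of_nonneg_left h1' hb0)
            _ = φ 0 * (a * ρ ^ k + b * ρ ^ (k - tbar)) := by ring
            _ ≤ φ 0 * ρ ^ (k + 1) := mul_le_mul_of_nonneg_left key hφ0nn
  have hgeo : Summable fun n : ℕ => ρ ^ n := summable_geometric_of_lt_one hρ0.le hρ1
  have hφsum : Summable φ :=
    Summable.of_nonneg_of_le (fun j => (hφb j).1) (fun j => (hφb j).2) (hgeo.mul_left (φ 0))
  have hφsum' : ∀ k, Summable fun l => φ (l + k) := fun k => (summable_nat_add_iff k).2 hφsum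
  -- the auxiliary sequence ψ
  set ψ : ℕ → ℝ := fun j => if tbar ≤ j then φ (j - tbar) else 0 with hψ_def
  have hψ1 : ∀ j, tbar ≤ j → ψ j = φ (j - tbar) := fun j h => if_pos h
  have hψ2 : ∀ j, j < tbar → ψ j = 0 := fun j h => if_neg (by omega)
  have hψshift : (fun n => ψ (n + tbar)) = φ := by
    funext n; rw [hψ1 _ (by omega)]; congr 1; omega
  have hψsum : Summable ψ := (summable_nat_add_iff tbar).1 (by rw [hψshift]; exact hφsum)
  have hψsum' : ∀ k, Summable fun l => ψ (l + k) := fun k => (summable_nat_add_iff k).2 hψsum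
  have hφsucc : ∀ j, φ (j + 1) = a * φ j + b * ψ j := by
    intro j
    rcases lt_or_ge j tbar with h | h
    · rw [hφ1 j h, hψ2 j h]; ring
    · rw [hφ2 j h, hψ1 j h]
  set Sφ : ℝ := ∑' j, φ j with hSφ_def
  have hψtsum : ∑' j, ψ j = Sφ := by
    have h := Summable.sum_add_tsum_nat_add (f := ψ) tbar hψsum
    have h0 : ∑ i ∈ Finset.range tbar, ψ i = 0 :=
      Finset.sum_eq_zero fun i hi => hψ2 i (Finset.mem_range.1 hi)
    rw [h0, zero_add, hψshift] at h
    rw [← h]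
  have hSφ : lam_e * Sφ = φ 0 := by
    have h1 : ∑' j, φ (j + 1) = a * Sφ + b * Sφ := by
      calc ∑' j, φ (j + 1) = ∑' j, (a * φ j + b * ψ j) := tsum_congr fun j => hφsucc j
        _ = (∑' j, a * φ j) + ∑' j, b * ψ j :=
            Summable.tsum_add (hφsum.mul_left a) (hψsum.mul_left b)
        _ = a * Sφ + b * Sφ := by rw [tsum_mul_left, tsum_mul_left, hψtsum]
    have h2 : Sφ = φ 0 + (a * Sφ + b * Sφ) := by rw [← h1]; exact Summable.tsum_eq_zero_add hφsum
    have h3 : lam_e * Sφ = Sφ - a * Sφ - b * Sφ := by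
      have : lam_e = 1 - (a + b) := by linarith
      rw [this]; ring
    linarith
  have hSφval : Sφ = lam / (lam * (tbar:ℝ) + 1) := by
    have h : lam_e * Sφ = lam_e * (lam / (lam * (tbar:ℝ) + 1)) := by
      rw [hSφ, hφ0]; field_simp
    exact mul_left_cancel₀ (ne_of_gt hle0) h
  -- tails of φ
  set T : ℕ → ℝ := fun k => ∑' l, φ (l + k) with hT_def
  have hTapp : ∀ k, T k = ∑' l, φ (l + k) := fun k => rfl
  have hT0 : T 0 = Sφ := tsum_congr fun l => by rw [add_zero]
  have hTnn : ∀ k, 0 ≤ T k := fun k => tsum_nonneg fun l => (hφb (l + k)).1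
  set C : ℝ := φ 0 * (1 - ρ)⁻¹ with hC_def
  have h1ρ : (0:ℝ) < 1 - ρ := by linarith
  have hC0 : 0 ≤ C := by rw [hC_def]; exact mul_nonneg hφ0nn (inv_nonneg.mpr h1ρ.le)
  have hTle : ∀ k, T k ≤ C * ρ ^ k := by
    intro k
    have hfun : (fun l : ℕ => φ 0 * ρ ^ k * ρ ^ l) = fun l : ℕ => φ 0 * ρ ^ (l + k) := by
      funext l; rw [pow_add]; ring
    have hg : Summable fun l : ℕ => φ 0 * ρ ^ (l + k) := by
      rw [← hfun]; exact hgeo.mul_left _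
    calc T k ≤ ∑' l, φ 0 * ρ ^ (l + k) :=
          Summable.tsum_le_tsum (fun l => (hφb (l + k)).2) (hφsum' k) hg
      _ = φ 0 * ρ ^ k * (1 - ρ)⁻¹ := by
          rw [← hfun, tsum_mul_left, tsum_geometric_of_lt_one hρ0.le hρ1]
      _ = C * ρ ^ k := by rw [hC_def]; ring
  have hTsummable : Summable T :=
    Summable.of_nonneg_of_le hTnn hTle (hgeo.mul_left C)
  -- recurrence for T
  have hψtail : ∀ j, (∑' l, ψ (l + j)) = T (j - tbar) := by
    intro j
    rcases le_or_gt tbar j with h | h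
    · rw [hTapp]
      exact tsum_congr fun l => by rw [hψ1 _ (by omega)]; congr 1; omega
    · have hj0 : j - tbar = 0 := by omega
      rw [hj0, hT0]
      have hs := Summable.sum_add_tsum_nat_add (f := fun l => ψ (l + j)) (tbar - j) (hψsum' j)
      have h0 : ∑ i ∈ Finset.range (tbar - j), ψ (i + j) = 0 :=
        Finset.sum_eq_zero fun i hi => hψ2 _ (by have := Finset.mem_range.1 hi; omega)
      have h1 : (fun l => ψ (l + (tbar - j) + j)) = φ := by
        funext l
        rw [show l + (tbar - j) + j = l + tbar by omega, hψ1 _ (by omega)]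
        congr 1; omega
      rw [h0, zero_add, h1] at hs
      rw [← hs]
  have hTrec : ∀ j, T (j + 1) = a * T j + b * T (j - tbar) := by
    intro j
    have e1 : T (j + 1) = ∑' l, (a * φ (l + j) + b * ψ (l + j)) := by
      rw [hTapp]
      exact tsum_congr fun l => by rw [show l + (j + 1) = (l + j) + 1 by ring, hφsucc]
    rw [e1, Summable.tsum_add ((hφsum' j).mul_left a) ((hψsum' j).mul_left b),
      tsum_mul_left, tsum_mul_left, hψtail j, ← hTapp]
  -- bound for T (· - tbar)
  set E : ℝ := C / ρ ^ tbar with hE_def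
  have hE0 : 0 ≤ E := by rw [hE_def]; positivity
  have hTsub_le : ∀ j, T (j - tbar) ≤ E * ρ ^ j := by
    intro j
    have h1 : ρ ^ (j - tbar) * ρ ^ tbar ≤ ρ ^ j := by
      rw [← pow_add]
      exact pow_le_pow_of_le_one hρ0.le hρ1.le (by omega)
    have h2 : ρ ^ (j - tbar) ≤ ρ ^ j / ρ ^ tbar := by
      rw [le_div_iff₀ (by positivity)]; exact h1
    calc T (j - tbar) ≤ C * ρ ^ (j - tbar) := hTle _
      _ ≤ C * (ρ ^ j / ρ ^ tbar) := mul_le_mul_of_nonneg_left h2 hC0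
      _ = E * ρ ^ j := by rw [hE_def]; ring
  have hTsubsum : Summable fun j => T (j - tbar) :=
    Summable.of_nonneg_of_le (fun j => hTnn _) hTsub_le (hgeo.mul_left E)
  have hTsub1sum : Summable fun j => T (j + 1 - tbar) := by
    refine Summable.of_nonneg_of_le (fun j => hTnn _) (fun j => ?_) (hgeo.mul_left E)
    calc T (j + 1 - tbar) ≤ E * ρ ^ (j + 1) := hTsub_le (j + 1)
      _ ≤ E * ρ ^ j := by
          exact mul_le_mul_of_nonneg_left (pow_le_pow_of_le_one hρ0.le hρ1.le (by omega)) hE0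
  -- the sum of T
  set X : ℝ := ∑' k, T k with hX_def
  have hTsubtsum : ∑' j, T (j - tbar) = tbar * Sφ + X := by
    have hs := Summable.sum_add_tsum_nat_add (f := fun j => T (j - tbar)) tbar hTsubsum
    have h0 : ∑ i ∈ Finset.range tbar, T (i - tbar) = tbar * Sφ := by
      rw [Finset.sum_congr rfl fun i hi => by
        rw [show i - tbar = 0 from by have := Finset.mem_range.1 hi; omega, hT0]]
      rw [Finset.sum_const, Finset.card_range, nsmul_eq_mul]
    have h1 : (fun i => T (i + tbar - tbar)) = T := by
      funext i; congr 1; omega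
    rw [h0, h1] at hs
    rw [← hs, hX_def]
  have hXrec : X = Sφ + a * X + b * tbar * Sφ + b * X := by
    have h1 : ∑' j, T (j + 1) = a * X + b * (tbar * Sφ + X) := by
      calc ∑' j, T (j + 1) = ∑' j, (a * T j + b * T (j - tbar)) := tsum_congr fun j => hTrec j
        _ = (∑' j, a * T j) + ∑' j, b * T (j - tbar) :=
            Summable.tsum_add (hTsummable.mul_left a) (hTsubsum.mul_left b)
        _ = a * X + b * (tbar * Sφ + X) := by
            rw [tsum_mul_left, tsum_mul_left, hTsubtsum, ← hX_def]
    have h2 : X = T 0 + (a * X + b * (tbar * Sφ + X)) := by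
      rw [← h1, hX_def]; exact Summable.tsum_eq_zero_add hTsummable
    rw [hT0] at h2
    linarith [h2]
  have hX : lam_e * X = Sφ + b * tbar * Sφ := by
    have h3 : lam_e * X = X - a * X - b * X := by
      have : lam_e = 1 - (a + b) := by linarith
      rw [this]; ring
    linarith
  -- value of V = ∑' j, T (j + 1 - tbar)
  have hV : ∑' j, T (j + 1 - tbar) = tbar * Sφ + (X - Sφ) := by
    have hs := Summable.sum_add_tsum_nat_add (f := fun j => T (j + 1 - tbar)) tbar hTsub1sum
    have h0 : ∑ i ∈ Finset.range tbar, T (i + 1 - tbar) = tbar * Sφ := by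
      rw [Finset.sum_congr rfl fun i hi => by
        rw [show i + 1 - tbar = 0 from by have := Finset.mem_range.1 hi; omega, hT0]]
      rw [Finset.sum_const, Finset.card_range, nsmul_eq_mul]
    have h1 : (fun i => T (i + tbar + 1 - tbar)) = fun i => T (i + 1) := by
      funext i; congr 1; omega
    have h2 : ∑' i, T (i + 1) = X - Sφ := by
      have := Summable.tsum_eq_zero_add hTsummable
      rw [hT0] at this
      rw [← hX_def] at this
      linarith
    rw [h0, h1, h2] at hs
    rw [← hs]
  -- recurrence for ω
  have hωrec : ∀ j, ω (j + 1) = a * ω j + lam_e * T (j + 1 - tbar) := by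
    intro j
    rcases le_or_gt (j + 1) tbar with h | h
    · have hz : j + 1 - tbar = 0 := by omega
      rw [hω1 (j + 1) (by omega) h, hz, hT0, hSφ]
      simp
    · have hΨ : ∑ l ∈ Finset.range (j + 1 - tbar), φ l + T (j + 1 - tbar) = Sφ :=
        Summable.sum_add_tsum_nat_add (j + 1 - tbar) hφsum
      rw [hω2 (j + 1) (by omega)]
      simp only [Nat.add_sub_cancel]
      have : lam_e * ∑ l ∈ Finset.range (j + 1 - tbar), φ l = φ 0 - lam_e * T (j + 1 - tbar) := by
        have := congrArg (lam_e * ·) hΨ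
        simp only [mul_add] at this
        rw [hSφ] at this
        linarith
      rw [this]; ring
  have hωnn : ∀ j, 0 ≤ ω j := by
    intro j
    induction j with
    | zero => rw [hω0]; positivity
    | succ k ih =>
      rw [hωrec k]
      exact add_nonneg (mul_nonneg ha0 ih) (mul_nonneg hle0.le (hTnn _))
  -- bound for ω
  set σ : ℝ := max a ρ with hσ_def
  have hσ0 : 0 ≤ σ := le_trans hρ0.le (le_max_right a ρ)
  have hσ1 : σ < 1 := max_lt ha1 hρ1
  set K : ℝ := max (ω 0) (lam_e * E) with hK_def
  have hK0 : 0 ≤ K := le_trans (hωnn 0) (le_max_left _ _)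
  have hωb : ∀ j, ω j ≤ K * (j + 1) * σ ^ j := by
    intro j
    induction j with
    | zero =>
      simp only [Nat.cast_zero, zero_add, mul_one, pow_zero]
      rw [hK_def]; exact le_max_left _ _
    | succ k ih =>
      rw [hωrec k]
      have h1 : a * ω k ≤ σ * (K * (k + 1) * σ ^ k) :=
        mul_le_mul (le_max_left a ρ) ih (hωnn k) hσ0
      have h2 : lam_e * T (k + 1 - tbar) ≤ K * σ ^ (k + 1) := by
        calc lam_e * T (k + 1 - tbar) ≤ lam_e * (E * ρ ^ (k + 1)) :=
              mul_le_mul_of_nonneg_left (hTsub_le (k + 1)) hle0.le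
          _ = (lam_e * E) * ρ ^ (k + 1) := by ring
          _ ≤ K * σ ^ (k + 1) := by
              apply mul_le_mul (le_max_right _ _)
                (pow_le_pow_left₀ hρ0.le (le_max_right a ρ) (k + 1))
                (by positivity) hK0
      calc a * ω k + lam_e * T (k + 1 - tbar)
          ≤ σ * (K * (k + 1) * σ ^ k) + K * σ ^ (k + 1) := add_le_add h1 h2
        _ = K * ((↑(k + 1) : ℝ) + 1) * σ ^ (k + 1) := by push_cast; ring
  have hbig : Summable fun j : ℕ => K * (j + 1) * σ ^ j := by
    have h1 : Summable fun n : ℕ => (n : ℝ) * σ ^ n := by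
      have := summable_pow_mul_geometric_of_norm_lt_one (R := ℝ) 1
        (r := σ) (by rwa [Real.norm_eq_abs, abs_of_nonneg hσ0])
      simpa using this
    have h2 : Summable fun n : ℕ => σ ^ n := summable_geometric_of_lt_one hσ0 hσ1
    have := (h1.mul_left K).add (h2.mul_left K)
    exact this.congr fun n => by push_cast; ring
  have hωsum : Summable ω := Summable.of_nonneg_of_le hωnn hωb hbig
  refine ⟨hωsum, ?_⟩
  -- compute the sum of ω
  set W : ℝ := ∑' j, ω j with hW_def
  have hWrec : W = ω 0 + (a * W + lam_e * (tbar * Sφ + (X - Sφ))) := by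
    have h1 : ∑' j, ω (j + 1) = a * W + lam_e * (tbar * Sφ + (X - Sφ)) := by
      calc ∑' j, ω (j + 1) = ∑' j, (a * ω j + lam_e * T (j + 1 - tbar)) :=
            tsum_congr fun j => hωrec j
        _ = (∑' j, a * ω j) + ∑' j, lam_e * T (j + 1 - tbar) :=
            Summable.tsum_add (hωsum.mul_left a) (hTsub1sum.mul_left lam_e)
        _ = a * W + lam_e * (tbar * Sφ + (X - Sφ)) := by
            rw [tsum_mul_left, tsum_mul_left, hV, ← hW_def]
    rw [← h1, hW_def]; exact Summable.tsum_eq_zero_add hωsum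
  -- final algebra
  have hfinal : ω 0 + lam_e * (tbar * Sφ + (X - Sφ)) = 1 - a := by
    have hlX : lam_e * X = Sφ + b * tbar * Sφ := hX
    have expand : ω 0 + lam_e * (tbar * Sφ + (X - Sφ))
        = ω 0 + lam_e * tbar * Sφ + (Sφ + b * tbar * Sφ) - lam_e * Sφ := by
      have : lam_e * (tbar * Sφ + (X - Sφ))
          = lam_e * tbar * Sφ + lam_e * X - lam_e * Sφ := by ring
      rw [this, hlX]; ring
    rw [expand, hω0, hSφval, ha_def, hb_def]
    field_simp
    ring
  have h1a : (0:ℝ) < 1 - a := by linarith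
  have : (1 - a) * W = 1 - a := by
    have : W - a * W = ω 0 + lam_e * (tbar * Sφ + (X - Sφ)) := by linarith [hWrec]
    rw [hfinal] at this
    linarith [this]
  have hW1 : W = 1 := by
    have := mul_left_cancel₀ (ne_of_gt h1a) (by rw [this, mul_one] : (1 - a) * W = (1 - a) * 1)
    exact this
  rw [← hW_def] at *
  exact hW1
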